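/- Let Γ act without inversion on a tree 𝒯 and let e ∈ E(𝒯) be an edge such that the smallest subtrees containing Γ·s(e) and containing Γ·r(e) are both all of 𝒯. If the quotient graph 𝒯/Γ minus the edges e, ē is disconnected, then Γ ≅ Γ₁ *_Σ Γ₂ is a non-trivial amalgamated free product over Σ = Stab(e): that is, Γ₁ ≠ Σ and Γ₂ ≠ Σ, where Γᵢ are the fundamental groups of the graph of groups restricted to the two connected components. -/

import Mathlib

open SimpleGraph

namespace AmalgamDevissage

variable {V Γ : Type*} [Group Γ] [MulAction Γ V]

/-- Darts in the orbit of the edge `(a,b)`. -/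
def Bad (Γ : Type*) [Group Γ] [MulAction Γ V] (a b : V) (p : V × V) : Prop :=
  ∃ δ : Γ, (p.1 = δ • a ∧ p.2 = δ • b) ∨ (p.1 = δ • b ∧ p.2 = δ • a)

/-- Reachability avoiding the orbit of the edge `(a,b)`. -/
def RR (T : SimpleGraph V) (Γ : Type*) [Group Γ] [MulAction Γ V] (a b x y : V) : Prop :=
  ∃ w : T.Walk x y, ∀ d ∈ w.darts, ¬ Bad Γ a b d.toProd

/-- The two darts of the single edge `(a,b)`. -/
def Ed (a b : V) (p : V × V) : Prop := (p.1 = a ∧ p.2 = b) ∨ (p.1 = b ∧ p.2 = a)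

/-- Reachability avoiding the single edge `(a,b)`. -/
def RE (T : SimpleGraph V) (a b x y : V) : Prop :=
  ∃ w : T.Walk x y, ∀ d ∈ w.darts, ¬ Ed a b d.toProd

variable {T : SimpleGraph V} {a b : V}

lemma Bad.swap {p : V × V} (h : Bad Γ a b p) : Bad Γ a b p.swap := by
  obtain ⟨δ, h⟩ := h
  exact ⟨δ, h.symm.imp (fun h => ⟨h.2, h.1⟩) (fun h => ⟨h.2, h.1⟩)⟩

lemma Ed.swap {p : V × V} (h : Ed a b p) : Ed a b p.swap := by
  exact h.symm.imp (fun h => ⟨h.2, h.1⟩) (fun h => ⟨h.2, h.1⟩)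

lemma Ed.bad (h : Ed a b p) : Bad Γ a b p := by
  exact ⟨1, by simpa [Ed] using h⟩

lemma RR.refl (x : V) : RR T Γ a b x x := ⟨Walk.nil, by simp⟩

lemma RR.symm {x y : V} (h : RR T Γ a b x y) : RR T Γ a b y x := by
  obtain ⟨w, hw⟩ := h
  refine ⟨w.reverse, fun d hd => ?_⟩
  rw [Walk.darts_reverse, List.mem_reverse, List.mem_map] at hd
  obtain ⟨d', hd', rfl⟩ := hd
  exact fun hb => hw d' hd' (by simpa [Dart.symm] using hb.swap)

lemma RR.trans {x y z : V} (h : RR T Γ a b x y) (h' : RR T Γ a b y z) :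
    RR T Γ a b x z := by
  obtain ⟨w, hw⟩ := h
  obtain ⟨w', hw'⟩ := h'
  refine ⟨w.append w', fun d hd => ?_⟩
  rw [Walk.darts_append, List.mem_append] at hd
  exact hd.elim (hw d) (hw' d)

lemma RE.refl (x : V) : RE T a b x x := ⟨Walk.nil, by simp⟩

lemma RE.symm {x y : V} (h : RE T a b x y) : RE T a b y x := by
  obtain ⟨w, hw⟩ := h
  refine ⟨w.reverse, fun d hd => ?_⟩
  rw [Walk.darts_reverse, List.mem_reverse, List.mem_map] at hd
  obtain ⟨d', hd', rfl⟩ := hd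
  exact fun hb => hw d' hd' (by simpa [Dart.symm] using hb.swap)

lemma RE.trans {x y z : V} (h : RE T a b x y) (h' : RE T a b y z) :
    RE T a b x z := by
  obtain ⟨w, hw⟩ := h
  obtain ⟨w', hw'⟩ := h'
  refine ⟨w.append w', fun d hd => ?_⟩
  rw [Walk.darts_append, List.mem_append] at hd
  exact hd.elim (hw d) (hw' d)

lemma RR.re {x y : V} (h : RR T Γ a b x y) : RE T a b x y := by
  obtain ⟨w, hw⟩ := h
  exact ⟨w, fun d hd he => hw d hd he.bad⟩

/-- The graph homomorphism given by the action of `γ`. -/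
def gmap (hact : ∀ (γ : Γ) (u v : V), T.Adj u v → T.Adj (γ • u) (γ • v)) (γ : Γ) : T →g T :=
  ⟨fun v => γ • v, fun h => hact γ _ _ h⟩

lemma RR.smul (hact : ∀ (γ : Γ) (u v : V), T.Adj u v → T.Adj (γ • u) (γ • v))
    (γ : Γ) {x y : V} (h : RR T Γ a b x y) : RR T Γ a b (γ • x) (γ • y) := by
  obtain ⟨w, hw⟩ := h
  refine ⟨w.map (gmap hact γ), fun d hd => ?_⟩
  replace hd : d ∈ (w.map (gmap hact γ)).darts := hd
  rw [Walk.darts_map, List.mem_map] at hd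
  obtain ⟨d', hd', rfl⟩ := hd
  rintro ⟨δ, hδ⟩
  refine hw d' hd' ⟨γ⁻¹ * δ, ?_⟩
  have h1 : (Hom.mapDart (gmap hact γ) d').toProd.1 = γ • d'.toProd.1 := rfl
  have h2 : (Hom.mapDart (gmap hact γ) d').toProd.2 = γ • d'.toProd.2 := rfl
  rw [h1, h2] at hδ
  refine hδ.imp ?_ ?_ <;>
    rintro ⟨ha, hb⟩ <;>
    constructor <;>
    rw [mul_smul] <;>
    first
      | (rw [← ha]; simp [smul_smul])
      | (rw [← hb]; simp [smul_smul])


section Sides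
variable (hT : T.IsTree) (hab : T.Adj a b)

/-- The edge `(a,b)` is a bridge: its two sides are not `RE`-connected. -/
lemma bridge (hT : T.IsTree) (hab : T.Adj a b) : ¬ RE T a b a b := by
  rintro ⟨w, hw⟩
  have hbr : T.IsBridge s(a, b) :=
    (isAcyclic_iff_forall_adj_isBridge.mp hT.2) hab
  rw [isBridge_iff_adj_and_forall_walk_mem_edges] at hbr
  have := hbr w
  rw [Walk.edges, List.mem_map] at this
  obtain ⟨d, hd, hde⟩ := this
  refine hw d hd ?_
  have h2 : s(d.toProd.1, d.toProd.2) = s(a, b) := hde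
  rw [Sym2.eq_iff] at h2
  exact h2

lemma adjRE {x y : V} (h : T.Adj x y) (hEd : ¬ Ed a b (x, y)) : RE T a b x y := by
  refine ⟨Walk.cons h Walk.nil, ?_⟩
  intro d hd
  simp only [Walk.darts_cons, Walk.darts_nil, List.mem_singleton] at hd
  subst hd
  exact hEd

/-- Every vertex is on the `a`-side or the `b`-side. -/
lemma sides (hT : T.IsTree) (x : V) : RE T a b a x ∨ RE T a b b x := by
  have key : ∀ {y x : V} (_ : T.Walk y x),
      RE T a b y x ∨ (RE T a b a x ∨ RE T a b b x) := by
    intro y x w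
    induction w with
    | nil => exact Or.inl (RE.refl _)
    | @cons y z x h w' ih =>
      by_cases hEd : Ed a b (y, z)
      · rcases ih with h' | h'
        · rcases hEd with ⟨rfl, rfl⟩ | ⟨rfl, rfl⟩
          · exact Or.inr (Or.inr h')
          · exact Or.inr (Or.inl h')
        · exact Or.inr h'
      · rcases ih with h' | h'
        · exact Or.inl ((adjRE h hEd).trans h')
        · exact Or.inr h'
  rcases key ((hT.1.preconnected a x).some) with h | h
  · exact Or.inl h
  · exact h

lemma sides_disjoint (hT : T.IsTree) (hab : T.Adj a b) (x : V) :
    ¬ (RE T a b a x ∧ RE T a b b x) := by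
  rintro ⟨h1, h2⟩
  exact bridge hT hab (h1.trans h2.symm)

/-- Translating an `RE`-connection within one side of the bridge. -/
lemma RE.smul_of_side (hact : ∀ (γ : Γ) (u v : V), T.Adj u v → T.Adj (γ • u) (γ • v))
    {γ : Γ} {c x y : V} (hx : RE T a b c x) (hxy : RE T a b x y)
    (hγ : ¬ RE T a b c (γ⁻¹ • a)) : RE T a b (γ • x) (γ • y) := by
  classical
  obtain ⟨w, hw⟩ := hxy
  refine ⟨w.map (gmap hact γ), ?_⟩
  intro d hd
  replace hd : d ∈ (w.map (gmap hact γ)).darts := hd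
  rw [Walk.darts_map, List.mem_map] at hd
  obtain ⟨d', hd', rfl⟩ := hd
  intro hEd
  -- one of the endpoints of `d'` is `γ⁻¹ • a`
  have hmem : γ⁻¹ • a ∈ w.support := by
    rcases hEd with ⟨hA, _⟩ | ⟨_, hA⟩
    · have hA' : γ • d'.toProd.1 = a := hA
      have : d'.toProd.1 = γ⁻¹ • a := by
        rw [← hA', smul_smul, inv_mul_cancel, one_smul]
      exact this ▸ w.dart_fst_mem_support_of_mem_darts hd'
    · have hA' : γ • d'.toProd.2 = a := hA
      have : d'.toProd.2 = γ⁻¹ • a := by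
        rw [← hA', smul_smul, inv_mul_cancel, one_smul]
      exact this ▸ w.dart_snd_mem_support_of_mem_darts hd'
  -- but then `γ⁻¹ • a` is on the same side as `c`
  refine hγ (hx.trans ⟨w.takeUntil _ hmem, fun d hd => hw d (w.darts_takeUntil_subset hmem hd)⟩)

end Sides



section Main

variable (T : SimpleGraph V) (a b : V)
variable (hact : ∀ (γ : Γ) (u v : V), T.Adj u v → T.Adj (γ • u) (γ • v))

/-- The stabilizer of the `R`-component of `c`. -/
def sideSubgroup (c : V) : Subgroup Γ where
  carrier := {γ : Γ | RR T Γ a b c (γ • c)}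
  one_mem' := by simpa using RR.refl (T := T) (Γ := Γ) (a := a) (b := b) c
  mul_mem' := by
    intro γ δ h h'
    have := h'.smul hact γ
    simpa [mul_smul] using h.trans this
  inv_mem' := by
    intro γ h
    have := (h.smul hact γ⁻¹).symm
    simpa [smul_smul] using this

lemma mem_sideSubgroup {c : V} {γ : Γ} :
    γ ∈ sideSubgroup T a b hact c ↔ RR T Γ a b c (γ • c) := Iff.rfl

lemma adjRR {x y : V} (h : T.Adj x y) (hB : ¬ Bad Γ a b (x, y)) : RR T Γ a b x y := by
  refine ⟨Walk.cons h Walk.nil, ?_⟩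
  intro d hd
  simp only [Walk.darts_cons, Walk.darts_nil, List.mem_singleton] at hd
  subst hd
  exact hB

/-- every vertex is `R`-connected to a translate of `a` or of `b` -/
lemma reach (Γ : Type*) [Group Γ] [MulAction Γ V] (hT : T.IsTree) (x : V) :
    ∃ δ : Γ, RR T Γ a b x (δ • a) ∨ RR T Γ a b x (δ • b) := by
  have key : ∀ {y x : V} (_ : T.Walk y x),
      RR T Γ a b y x ∨ ∃ δ : Γ, RR T Γ a b (δ • a) x ∨ RR T Γ a b (δ • b) x := by
    intro y x w
    induction w with
    | nil => exact Or.inl (RR.refl _)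
    | @cons y z x h w' ih =>
      by_cases hB : Bad Γ a b (y, z)
      · rcases ih with h' | h'
        · rcases hB with ⟨δ, ⟨h1, h2⟩ | ⟨h1, h2⟩⟩
          · exact Or.inr ⟨δ, Or.inr (h2 ▸ h')⟩
          · exact Or.inr ⟨δ, Or.inl (h2 ▸ h')⟩
        · exact Or.inr h'
      · rcases ih with h' | h'
        · exact Or.inl ((adjRR T a b h hB).trans h')
        · exact Or.inr h'
  rcases key ((hT.1.preconnected a x).some) with h | h
  · exact ⟨1, Or.inl (by simpa using h.symm)⟩
  · obtain ⟨δ, h⟩ := h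
    exact ⟨δ, h.imp RR.symm RR.symm⟩

/-- The cross lemma: no translate of `b` is in the component of `a`. -/
lemma cross (hact : ∀ (γ : Γ) (u v : V), T.Adj u v → T.Adj (γ • u) (γ • v)) (hT : T.IsTree)
    (hdisc : ¬ ∀ u v : V, ∃ (γ : Γ) (w : T.Walk u (γ • v)),
      ∀ d ∈ w.darts, ¬ ∃ δ : Γ,
        (d.toProd.1 = δ • a ∧ d.toProd.2 = δ • b) ∨
        (d.toProd.1 = δ • b ∧ d.toProd.2 = δ • a)) :
    ∀ γ : Γ, ¬ RR T Γ a b a (γ • b) := by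
  intro γ₀ h0
  apply hdisc
  -- every vertex is `R`-connected to a translate of `a`
  have reachA : ∀ x : V, ∃ δ : Γ, RR T Γ a b x (δ • a) := by
    intro x
    rcases reach T a b Γ hT x with ⟨δ, h | h⟩
    · exact ⟨δ, h⟩
    · refine ⟨δ * γ₀⁻¹, ?_⟩
      have := h0.smul hact (δ * γ₀⁻¹)
      rw [smul_smul, mul_assoc, inv_mul_cancel, mul_one] at this
      exact h.trans this.symm
  intro u v
  obtain ⟨δ₁, h₁⟩ := reachA u
  obtain ⟨δ₂, h₂⟩ := reachA v
  refine ⟨δ₁ * δ₂⁻¹, ?_⟩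
  have h₂' := h₂.smul hact (δ₁ * δ₂⁻¹)
  rw [smul_smul, mul_assoc, inv_mul_cancel, mul_one] at h₂'
  have : RR T Γ a b u ((δ₁ * δ₂⁻¹) • v) := h₁.trans h₂'.symm
  obtain ⟨w, hw⟩ := this
  exact ⟨w, hw⟩

/-- Γ is generated by the two side subgroups. -/
lemma generation (hT : T.IsTree)
    (hcross : ∀ γ : Γ, ¬ RR T Γ a b a (γ • b)) (γ : Γ) :
    γ ∈ Subgroup.closure ((sideSubgroup T a b hact a : Set Γ) ∪
      (sideSubgroup T a b hact b : Set Γ)) := by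
  set H := Subgroup.closure ((sideSubgroup T a b hact a : Set Γ) ∪
      (sideSubgroup T a b hact b : Set Γ)) with hH
  have hA : ∀ δ : Γ, RR T Γ a b a (δ • a) → δ ∈ H :=
    fun δ h => Subgroup.subset_closure (Or.inl h)
  have hB : ∀ δ : Γ, RR T Γ a b b (δ • b) → δ ∈ H :=
    fun δ h => Subgroup.subset_closure (Or.inr h)
  have hcross' : ∀ (δ γ : Γ), ¬ RR T Γ a b (δ • a) (γ • b) := by
    intro δ γ h
    have := h.smul hact δ⁻¹
    rw [smul_smul, inv_mul_cancel, one_smul, smul_smul] at this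
    exact hcross _ this
  -- the invariant along walks
  have step : ∀ {y x : V}, T.Walk y x →
      (∃ h : Γ, h ∈ H ∧ (RR T Γ a b y (h • a) ∨ RR T Γ a b y (h • b))) →
      (∃ h : Γ, h ∈ H ∧ (RR T Γ a b x (h • a) ∨ RR T Γ a b x (h • b))) := by
    intro y x w
    induction w with
    | nil => exact id
    | @cons y z x hadj w' ih =>
      intro hy
      refine ih ?_
      obtain ⟨h, hh, hcase⟩ := hy
      by_cases hbad : Bad Γ a b (y, z)
      · obtain ⟨δ, ⟨h1, h2⟩ | ⟨h1, h2⟩⟩ := hbad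
        · -- y = δ • a, z = δ • b
          replace h1 : y = δ • a := h1
          replace h2 : z = δ • b := h2
          rcases hcase with hc | hc
          · -- RR (δ•a) (h•a) : δ⁻¹h ∈ side a
            have : RR T Γ a b a ((δ⁻¹ * h) • a) := by
              have := (h1 ▸ hc).smul hact δ⁻¹
              rw [smul_smul, inv_mul_cancel, one_smul, smul_smul] at this
              exact this
            have hδ : δ ∈ H := by
              have h1' : δ⁻¹ * h ∈ H := hA _ this
              have := mul_mem hh (inv_mem h1')
              simpa [mul_assoc] using this
            exact ⟨δ, hδ, Or.inr (h2 ▸ RR.refl _)⟩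
          · exact absurd (h1 ▸ hc) (hcross' δ h)
        · -- y = δ • b, z = δ • a
          replace h1 : y = δ • b := h1
          replace h2 : z = δ • a := h2
          rcases hcase with hc | hc
          · -- RR (δ•b) (h•a) : contradiction
            have : RR T Γ a b (h • a) (δ • b) := (h1 ▸ hc).symm
            exact absurd this (hcross' h δ)
          · have : RR T Γ a b b ((δ⁻¹ * h) • b) := by
              have := (h1 ▸ hc).smul hact δ⁻¹
              rw [smul_smul, inv_mul_cancel, one_smul, smul_smul] at this
              exact this
            have hδ : δ ∈ H := by
              have h1' : δ⁻¹ * h ∈ H := hB _ this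
              have := mul_mem hh (inv_mem h1')
              simpa [mul_assoc] using this
            exact ⟨δ, hδ, Or.inl (h2 ▸ RR.refl _)⟩
      · exact ⟨h, hh, hcase.imp
          (fun hc => ((adjRR T a b hadj hbad).symm).trans hc)
          (fun hc => ((adjRR T a b hadj hbad).symm).trans hc)⟩
  have := step ((hT.1.preconnected a (γ • a)).some)
    ⟨1, one_mem _, Or.inl (by simpa using RR.refl (T := T) (Γ := Γ) (a := a) (b := b) a)⟩
  obtain ⟨h, hh, hc | hc⟩ := this
  · have : RR T Γ a b a ((γ⁻¹ * h) • a) := by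
      have := hc.smul hact γ⁻¹
      rw [smul_smul, inv_mul_cancel, one_smul, smul_smul] at this
      exact this
    have h1' : γ⁻¹ * h ∈ H := hA _ this
    have := mul_mem hh (inv_mem h1')
    simpa [mul_assoc] using this
  · have : RR T Γ a b a ((γ⁻¹ * h) • b) := by
      have := hc.smul hact γ⁻¹
      rw [smul_smul, inv_mul_cancel, one_smul, smul_smul] at this
      exact this
    exact absurd this (hcross _)


section PingPong

variable (hT : T.IsTree) (hab : T.Adj a b)

lemma not_stab_iff {γ : Γ} :
    γ ∉ MulAction.stabilizer Γ a ⊓ MulAction.stabilizer Γ b ↔ ¬ (γ • a = a ∧ γ • b = b) := by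
  rw [Subgroup.mem_inf, MulAction.mem_stabilizer_iff, MulAction.mem_stabilizer_iff]

lemma not_ed (hnoinv : ∀ (γ : Γ) (u v : V), T.Adj u v → ¬(γ • u = v ∧ γ • v = u))
    (hab : T.Adj a b) {γ : Γ}
    (hγ : γ ∉ MulAction.stabilizer Γ a ⊓ MulAction.stabilizer Γ b) :
    ¬ Ed a b (γ • a, γ • b) := by
  rintro (⟨h1, h2⟩ | ⟨h1, h2⟩)
  · exact (not_stab_iff a b).mp hγ ⟨h1, h2⟩
  · exact hnoinv γ a b hab ⟨h1, h2⟩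

lemma side_a (hT : T.IsTree) (hab : T.Adj a b)
    (hnoinv : ∀ (γ : Γ) (u v : V), T.Adj u v → ¬(γ • u = v ∧ γ • v = u))
    {γ : Γ} (hγ : γ ∈ sideSubgroup T a b hact a)
    (hγS : γ ∉ MulAction.stabilizer Γ a ⊓ MulAction.stabilizer Γ b) :
    ¬ RE T a b b (γ • a) ∧ ¬ RE T a b b (γ • b) := by
  have h1 : RE T a b a (γ • a) := (mem_sideSubgroup T a b hact |>.mp hγ).re
  have h2 : RE T a b a (γ • b) :=
    h1.trans (adjRE (hact γ a b hab) (not_ed T a b hnoinv hab hγS))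
  exact ⟨fun h => sides_disjoint hT hab _ ⟨h1, h⟩,
         fun h => sides_disjoint hT hab _ ⟨h2, h⟩⟩

lemma side_b (hT : T.IsTree) (hab : T.Adj a b)
    (hnoinv : ∀ (γ : Γ) (u v : V), T.Adj u v → ¬(γ • u = v ∧ γ • v = u))
    {γ : Γ} (hγ : γ ∈ sideSubgroup T a b hact b)
    (hγS : γ ∉ MulAction.stabilizer Γ a ⊓ MulAction.stabilizer Γ b) :
    RE T a b b (γ • a) ∧ RE T a b b (γ • b) := by
  have h1 : RE T a b b (γ • b) := (mem_sideSubgroup T a b hact |>.mp hγ).re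
  have h2 : RE T a b b (γ • a) :=
    h1.trans (adjRE (hact γ a b hab) (not_ed T a b hnoinv hab hγS)).symm
  exact ⟨h2, h1⟩

lemma pingpong (hT : T.IsTree) (hab : T.Adj a b)
    (hnoinv : ∀ (γ : Γ) (u v : V), T.Adj u v → ¬(γ • u = v ∧ γ • v = u)) :
    ∀ (l : List (Bool × Γ)) (t : Bool) (g : Γ),
      ((t, g) :: l).Chain' (fun p q => p.1 ≠ q.1) →
      (∀ p ∈ (t, g) :: l, p.2 ∈ sideSubgroup T a b hact (cond p.1 a b) ∧
        p.2 ∉ MulAction.stabilizer Γ a ⊓ MulAction.stabilizer Γ b) →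
      (if t then
         ¬ RE T a b b ((((t, g) :: l).map Prod.snd).prod • a) ∧
         ¬ RE T a b b ((((t, g) :: l).map Prod.snd).prod • b)
       else
         RE T a b b ((((t, g) :: l).map Prod.snd).prod • a) ∧
         RE T a b b ((((t, g) :: l).map Prod.snd).prod • b)) := by
  intro l
  induction l with
  | nil =>
    intro t g _ hmem
    obtain ⟨hg, hgS⟩ := hmem (t, g) List.mem_cons_self
    have hprod : (([(t, g)]).map Prod.snd).prod = g := by simp
    rw [hprod]
    cases t with
    | true =>
      rw [if_pos rfl]
      exact side_a T a b hact hT hab hnoinv hg hgS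
    | false =>
      rw [if_neg (by decide : ¬ (false = true))]
      exact side_b T a b hact hT hab hnoinv hg hgS
  | cons p l ih =>
    obtain ⟨t', g'⟩ := p
    intro t g hchain hmem
    have hne : t ≠ t' := (List.isChain_cons_cons.mp hchain).1
    have hchain' : ((t', g') :: l).Chain' (fun p q => p.1 ≠ q.1) :=
      (List.isChain_cons_cons.mp hchain).2
    have hmem' : ∀ p ∈ (t', g') :: l, p.2 ∈ sideSubgroup T a b hact (cond p.1 a b) ∧
        p.2 ∉ MulAction.stabilizer Γ a ⊓ MulAction.stabilizer Γ b :=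
      fun p hp => hmem p (List.mem_cons_of_mem _ hp)
    obtain ⟨hg, hgS⟩ := hmem (t, g) List.mem_cons_self
    have IH := ih t' g' hchain' hmem'
    have hprod : ((((t, g) :: (t', g') :: l)).map Prod.snd).prod
        = g * (((t', g') :: l).map Prod.snd).prod := by
      rw [List.map_cons, List.prod_cons]
    rw [hprod]
    have hginvS : g⁻¹ ∉ MulAction.stabilizer Γ a ⊓ MulAction.stabilizer Γ b := by
      intro h
      exact hgS (by simpa using inv_mem h)
    cases t with
    | true =>
      -- g stabilizes side of a; t' = false
      have ht' : t' = false := by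
        cases t' with
        | false => rfl
        | true => exact absurd rfl hne
      subst ht'
      rw [if_neg (by decide : ¬ (false = true))] at IH
      rw [if_pos rfl]
      have hga : g ∈ sideSubgroup T a b hact a := by simpa using hg
      have hγ : ¬ RE T a b b (g⁻¹ • a) :=
        (side_a T a b hact hT hab hnoinv (inv_mem hga) hginvS).1
      have hgb : ¬ RE T a b b (g • b) :=
        (side_a T a b hact hT hab hnoinv hga hgS).2
      constructor
      · intro hcon
        have h1 := RE.smul_of_side (γ := g) hact (RE.refl b) IH.1 hγ
        rw [← mul_smul] at h1
        exact hgb (hcon.trans h1.symm)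
      · intro hcon
        have h1 := RE.smul_of_side (γ := g) hact (RE.refl b) IH.2 hγ
        rw [← mul_smul] at h1
        exact hgb (hcon.trans h1.symm)
    | false =>
      -- g stabilizes side of b; t' = true
      have ht' : t' = true := by
        cases t' with
        | false => exact absurd rfl hne
        | true => rfl
      subst ht'
      rw [if_pos rfl] at IH
      rw [if_neg (by decide : ¬ (false = true))]
      have hgb : g ∈ sideSubgroup T a b hact b := by simpa using hg
      have hside := side_b T a b hact hT hab hnoinv hgb hgS
      have hγ : ¬ RE T a b a (g⁻¹ • a) := by
        intro h
        exact sides_disjoint hT hab _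
          ⟨h, (side_b T a b hact hT hab hnoinv (inv_mem hgb) hginvS).1⟩
      have hPa : RE T a b a ((((true, g') :: l).map Prod.snd).prod • a) := by
        rcases sides hT ((((true, g') :: l).map Prod.snd).prod • a) with h | h
        · exact h
        · exact absurd h IH.1
      have hPb : RE T a b a ((((true, g') :: l).map Prod.snd).prod • b) := by
        rcases sides hT ((((true, g') :: l).map Prod.snd).prod • b) with h | h
        · exact h
        · exact absurd h IH.2
      constructor
      · have h1 := RE.smul_of_side (γ := g) hact (RE.refl a) hPa hγ
        rw [← mul_smul] at h1
        exact hside.1.trans h1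
      · have h1 := RE.smul_of_side (γ := g) hact (RE.refl a) hPb hγ
        rw [← mul_smul] at h1
        exact hside.1.trans h1

/-- The product of a nonempty reduced word is not in the stabilizer of the edge. -/
lemma prod_not_stab (hT : T.IsTree) (hab : T.Adj a b)
    (hnoinv : ∀ (γ : Γ) (u v : V), T.Adj u v → ¬(γ • u = v ∧ γ • v = u))
    (l : List (Bool × Γ)) (t : Bool) (g : Γ)
    (hchain : ((t, g) :: l).Chain' (fun p q => p.1 ≠ q.1))
    (hmem : ∀ p ∈ (t, g) :: l, p.2 ∈ sideSubgroup T a b hact (cond p.1 a b) ∧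
      p.2 ∉ MulAction.stabilizer Γ a ⊓ MulAction.stabilizer Γ b) :
    (((t, g) :: l).map Prod.snd).prod ∉
      MulAction.stabilizer Γ a ⊓ MulAction.stabilizer Γ b := by
  intro hS
  have hPP := pingpong T a b hact hT hab hnoinv l t g hchain hmem
  obtain ⟨ha', hb'⟩ := Subgroup.mem_inf.mp hS
  rw [MulAction.mem_stabilizer_iff] at ha' hb'
  cases t with
  | true =>
    rw [if_pos rfl] at hPP
    rw [hb'] at hPP
    exact hPP.2 (RE.refl b)
  | false =>
    rw [if_neg (by decide : ¬ (false = true))] at hPP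
    rw [ha'] at hPP
    exact bridge hT hab hPP.1.symm

end PingPong

end Main

open Monoid.PushoutI.NormalWord in
lemma mem_set_not_range {ι : Type*} {G : ι → Type*} [∀ i, Group (G i)] {H : Type*} [Group H]
    {φ : ∀ i, H →* G i} (d : Transversal φ) {i : ι} {g : G i}
    (hset : g ∈ d.set i) (hne : g ≠ 1) : g ∉ (φ i).range := by
  rintro ⟨s, rfl⟩
  have hinj := (d.compl i).1
  have h1 : ((⟨⟨φ i s, MonoidHom.mem_range.2 ⟨s, rfl⟩⟩, ⟨1, d.one_mem i⟩⟩ :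
      ((φ i).range : Set (G i)) × (d.set i)))
      = (⟨⟨1, one_mem _⟩, ⟨φ i s, hset⟩⟩ :
      ((φ i).range : Set (G i)) × (d.set i)) := by
    apply hinj
    simp
  have h2 := congrArg (fun p => (p.2 : G i)) h1
  simp only at h2
  exact hne h2.symm

section NonTriv

variable {T : SimpleGraph V} {a b : V}

lemma not_all_side (hT : T.IsTree) (c : V)
    (hspan : ∀ x : V, ∃ (γ₁ γ₂ : Γ) (w : T.Walk (γ₁ • c) (γ₂ • c)), w.IsPath ∧ x ∈ w.support)
    (hdisc : ¬ ∀ u v : V, ∃ (γ : Γ) (w : T.Walk u (γ • v)),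
      ∀ d ∈ w.darts, ¬ ∃ δ : Γ,
        (d.toProd.1 = δ • a ∧ d.toProd.2 = δ • b) ∨
        (d.toProd.1 = δ • b ∧ d.toProd.2 = δ • a))
    (hall : ∀ γ : Γ, RR T Γ a b c (γ • c)) : False := by
  classical
  have allR : ∀ x : V, RR T Γ a b c x := by
    intro x
    obtain ⟨γ₁, γ₂, p, hp, hxp⟩ := hspan x
    have hRR : RR T Γ a b (γ₁ • c) (γ₂ • c) := (hall γ₁).symm.trans (hall γ₂)
    obtain ⟨W, hW⟩ := hRR
    have hbp := W.bypass_isPath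
    obtain ⟨q, _, huniq⟩ := hT.existsUnique_path (γ₁ • c) (γ₂ • c)
    have hpq : p = W.bypass := by rw [huniq p hp, huniq W.bypass hbp]
    have hdartsp : ∀ d ∈ p.darts, ¬ Bad Γ a b d.toProd := by
      intro d hd
      exact hW d (W.darts_bypass_subset (hpq ▸ hd))
    have h1 : RR T Γ a b (γ₁ • c) x :=
      ⟨p.takeUntil x hxp, fun d hd => hdartsp d (p.darts_takeUntil_subset hxp hd)⟩
    exact (hall γ₁).trans h1
  apply hdisc
  intro u v
  obtain ⟨w, hw⟩ := (allR u).symm.trans (allR ((1 : Γ) • v))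
  exact ⟨1, w, hw⟩

end NonTriv

end AmalgamDevissage



open AmalgamDevissage

/-- **Dévissage, amalgam case.**  Let `Γ` act (by automorphisms, without inversion) on
a tree `T`, and let `e` be an edge with endpoints `a, b` such that the smallest
subtrees containing the orbits `Γ·a`, respectively `Γ·b`, are both all of `T`.  If
the quotient graph `T/Γ` minus the edges `e, ē` is disconnected (it is *not* the case
that any two vertices of `T` are joined, up to translating the second by `Γ`, by a
path avoiding the orbit of `e`), then `Γ ≅ Γ₁ *_Σ Γ₂` is a *non-trivial* amalgamated
free product over `Σ = Stab(e)`: there are subgroups `Γ₁ = Gs true`, `Γ₂ = Gs false`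
of `Γ`, both containing `S = Stab(e)` (the `γ` fixing both `a` and `b`), and an
isomorphism `ψ` from the amalgamated free product (the pushout of the two inclusions
of `S`) to `Γ` restricting to the inclusion on each `Γᵢ`, with `Γ₁ ≠ Σ ≠ Γ₂`. -/
theorem amalgam_decomposition_of_quotient_minus_edge_disconnected
    {V Γ : Type*} [Group Γ] [MulAction Γ V]
    (T : SimpleGraph V) (hT : T.IsTree)
    (hact : ∀ (γ : Γ) (u v : V), T.Adj u v → T.Adj (γ • u) (γ • v))
    (hnoinv : ∀ (γ : Γ) (u v : V), T.Adj u v → ¬(γ • u = v ∧ γ • v = u))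
    (a b : V) (hab : T.Adj a b)
    (hspan_a : ∀ x : V, ∃ (γ₁ γ₂ : Γ) (w : T.Walk (γ₁ • a) (γ₂ • a)),
      w.IsPath ∧ x ∈ w.support)
    (hspan_b : ∀ x : V, ∃ (γ₁ γ₂ : Γ) (w : T.Walk (γ₁ • b) (γ₂ • b)),
      w.IsPath ∧ x ∈ w.support)
    (hdisc : ¬ ∀ u v : V, ∃ (γ : Γ) (w : T.Walk u (γ • v)),
      ∀ d ∈ w.darts, ¬ ∃ δ : Γ,
        (d.toProd.1 = δ • a ∧ d.toProd.2 = δ • b) ∨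
        (d.toProd.1 = δ • b ∧ d.toProd.2 = δ • a)) :
    ∃ (Gs : Bool → Subgroup Γ)
      (hle : ∀ i : Bool, MulAction.stabilizer Γ a ⊓ MulAction.stabilizer Γ b ≤ Gs i)
      (ψ : Monoid.PushoutI (fun i : Bool => Subgroup.inclusion (hle i)) ≃* Γ),
      (∀ (i : Bool) (x : Gs i), ψ (Monoid.PushoutI.of i x) = (x : Γ)) ∧
      ∀ i : Bool, Gs i ≠ MulAction.stabilizer Γ a ⊓ MulAction.stabilizer Γ b := by
  classical
  let Gs : Bool → Subgroup Γ := fun i => sideSubgroup T a b hact (cond i a b)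
  have hle : ∀ i : Bool, MulAction.stabilizer Γ a ⊓ MulAction.stabilizer Γ b ≤ Gs i := by
    intro i σ hσ
    obtain ⟨h1, h2⟩ := Subgroup.mem_inf.mp hσ
    rw [MulAction.mem_stabilizer_iff] at h1 h2
    show RR T Γ a b (cond i a b) (σ • (cond i a b))
    cases i
    · rw [show σ • (cond false a b) = cond false a b from h2]
      exact RR.refl _
    · rw [show σ • (cond true a b) = cond true a b from h1]
      exact RR.refl _
  let φ : ∀ i : Bool, ↥(MulAction.stabilizer Γ a ⊓ MulAction.stabilizer Γ b) →* ↥(Gs i) :=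
    fun i => Subgroup.inclusion (hle i)
  have hcomp : ∀ i, ((Gs i).subtype).comp (φ i)
      = (MulAction.stabilizer Γ a ⊓ MulAction.stabilizer Γ b).subtype :=
    fun i => Subgroup.subtype_comp_inclusion (hle i)
  let π := Monoid.PushoutI.lift (fun i => (Gs i).subtype)
    (MulAction.stabilizer Γ a ⊓ MulAction.stabilizer Γ b).subtype hcomp
  have hπof : ∀ (i : Bool) (x : ↥(Gs i)), π (Monoid.PushoutI.of i x) = (x : Γ) :=
    fun i x => Monoid.PushoutI.lift_of _ _ hcomp x
  have hcross := cross T a b hact hT hdisc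
  -- surjectivity
  have hrange : Subgroup.closure ((sideSubgroup T a b hact a : Set Γ) ∪
      (sideSubgroup T a b hact b : Set Γ)) ≤ π.range := by
    rw [Subgroup.closure_le]
    rintro x (hx | hx)
    · exact ⟨Monoid.PushoutI.of (φ := φ) true ⟨x, hx⟩, hπof true ⟨x, hx⟩⟩
    · exact ⟨Monoid.PushoutI.of (φ := φ) false ⟨x, hx⟩, hπof false ⟨x, hx⟩⟩
  have hsurj : Function.Surjective π := by
    intro γ
    obtain ⟨z, hz⟩ := hrange (generation T a b hact hT hcross γ)
    exact ⟨z, hz⟩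
  -- injectivity
  have hinj : Function.Injective π := by
    rw [injective_iff_map_eq_one]
    intro x hx
    obtain ⟨d⟩ := Monoid.PushoutI.NormalWord.transversal_nonempty φ
      (fun i => Subgroup.inclusion_injective (hle i))
    set w : Monoid.PushoutI.NormalWord d := (Monoid.PushoutI.NormalWord.equiv (d := d)) x
      with hwdef
    have hxw : w.prod = x := (Monoid.PushoutI.NormalWord.equiv (d := d)).symm_apply_apply x
    have hcalc : π x = (w.head : Γ) * ((w.toList.map (fun l => ((l.snd : Γ)))).prod) := by
      rw [← hxw]
      show π (Monoid.PushoutI.base φ w.head * Monoid.PushoutI.ofCoprodI w.toWord.prod) = _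
      rw [map_mul, Monoid.PushoutI.lift_base]
      congr 1
      show (π.comp Monoid.PushoutI.ofCoprodI)
        ((w.toList.map (fun l => Monoid.CoprodI.of l.snd)).prod) = _
      rw [map_list_prod, List.map_map]
      refine congrArg List.prod (List.map_congr_left ?_)
      intro l _
      show π (Monoid.PushoutI.ofCoprodI (Monoid.CoprodI.of l.snd)) = _
      rw [Monoid.PushoutI.ofCoprodI_of]
      exact hπof l.fst l.snd
    rcases hlist : w.toList with _ | ⟨p, rest⟩
    · -- empty word
      rw [hlist] at hcalc
      simp only [List.map_nil, List.prod_nil, mul_one] at hcalc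
      have hhead : (w.head : Γ) = 1 := by rw [← hcalc, hx]
      have hhead' : w.head = 1 := Subtype.ext hhead
      have hwempty : w = Monoid.PushoutI.NormalWord.empty :=
        Monoid.PushoutI.NormalWord.ext hhead' (by rw [hlist]; rfl)
      rw [← hxw, hwempty, Monoid.PushoutI.NormalWord.prod_empty]
    · -- nonempty word : contradiction with ping-pong
      exfalso
      have hPmem : ((w.toList.map (fun l => ((l.snd : Γ)))).prod) ∈
          MulAction.stabilizer Γ a ⊓ MulAction.stabilizer Γ b := by
        have h1 : (w.head : Γ) * ((w.toList.map (fun l => ((l.snd : Γ)))).prod) = 1 := by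
          rw [← hcalc, hx]
        have h2 : ((w.toList.map (fun l => ((l.snd : Γ)))).prod) = (w.head : Γ)⁻¹ :=
          eq_inv_of_mul_eq_one_right h1
        rw [h2]
        exact inv_mem (SetLike.coe_mem w.head)
      set f : (Σ i : Bool, ↥(Gs i)) → Bool × Γ := fun l => (l.fst, (l.snd : Γ)) with hf
      have hc := w.chain_ne
      rw [hlist] at hc
      have hchain' : List.Chain' (fun p q => p.1 ≠ q.1) ((p :: rest).map f) :=
        List.isChain_map_of_isChain f (fun a b h => h) hc
      rw [List.map_cons] at hchain'
      have hmem' : ∀ q ∈ (p.fst, (p.snd : Γ)) :: rest.map f,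
          q.2 ∈ sideSubgroup T a b hact (cond q.1 a b) ∧
          q.2 ∉ MulAction.stabilizer Γ a ⊓ MulAction.stabilizer Γ b := by
        intro q hq
        have hq' : q ∈ (p :: rest).map f := by rw [List.map_cons]; exact hq
        obtain ⟨l, hl, rfl⟩ := List.mem_map.mp hq'
        refine ⟨l.snd.2, ?_⟩
        intro hSmem
        have hset := w.normalized l.fst l.snd (by rw [hlist]; exact hl)
        have hne1 := w.ne_one l (by rw [hlist]; exact hl)
        have hnr := mem_set_not_range d hset hne1
        exact hnr ⟨⟨(l.snd : Γ), hSmem⟩, Subtype.ext rfl⟩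
      have hns := prod_not_stab T a b hact hT hab hnoinv (rest.map f) p.fst (p.snd : Γ)
        hchain' hmem'
      apply hns
      have hLs : (((p.fst, (p.snd : Γ)) :: rest.map f).map Prod.snd).prod
          = (w.toList.map (fun l => ((l.snd : Γ)))).prod := by
        rw [hlist, ← List.map_cons (f := f) (a := p) (l := rest), List.map_map]
        rfl
      rw [hLs]
      exact hPmem
  -- non-triviality
  have hnt : ∀ i : Bool, Gs i ≠ MulAction.stabilizer Γ a ⊓ MulAction.stabilizer Γ b := by
    intro i hi
    cases i
    · -- Gs false = S, so everything stabilizes the side of `a`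
      have hall : ∀ γ : Γ, RR T Γ a b a (γ • a) := by
        intro γ
        have h1 : Subgroup.closure ((sideSubgroup T a b hact a : Set Γ) ∪
            (sideSubgroup T a b hact b : Set Γ)) ≤ sideSubgroup T a b hact a := by
          rw [Subgroup.closure_le]
          rintro x (hx | hx)
          · exact hx
          · have hx' : x ∈ Gs false := hx
            rw [hi] at hx'
            exact hle true hx'
        exact h1 (generation T a b hact hT hcross γ)
      exact not_all_side hT a hspan_a hdisc hall
    · -- Gs true = S, so everything stabilizes the side of `b`
      have hall : ∀ γ : Γ, RR T Γ a b b (γ • b) := by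
        intro γ
        have h1 : Subgroup.closure ((sideSubgroup T a b hact a : Set Γ) ∪
            (sideSubgroup T a b hact b : Set Γ)) ≤ sideSubgroup T a b hact b := by
          rw [Subgroup.closure_le]
          rintro x (hx | hx)
          · have hx' : x ∈ Gs true := hx
            rw [hi] at hx'
            exact hle false hx'
          · exact hx
        exact h1 (generation T a b hact hT hcross γ)
      exact not_all_side hT b hspan_b hdisc hall
  exact ⟨Gs, hle, MulEquiv.ofBijective π ⟨hinj, hsurj⟩, fun i x => hπof i x, hnt⟩
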